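/- Let A = (a_{ij}) ∈ M_n(ℝ₊) and let 1 ≤ k < n be a positive integer. Set c = min{ max_{j=1,…,k} a_{i_j i_j} : 1 ≤ i_1 < i_2 < ⋯ < i_k ≤ n } and d = max_{1≤i,j≤n} a_{ij}. Then every z with c ≤ z ≤ d belongs to W_max^k(A), i.e. [c, d] ⊆ W_max^k(A). -/

import Mathlib

open Matrix

/-- Max-algebra matrix product: `(A ⊗ B) i j = max_p (A i p * B p j)`. -/
noncomputable def maxMul {n m l : ℕ} (A : Matrix (Fin n) (Fin m) ℝ)
    (B : Matrix (Fin m) (Fin l) ℝ) : Matrix (Fin n) (Fin l) ℝ :=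
  Matrix.of fun i j => ⨆ p, A i p * B p j

/-- Max trace: `tr⊗(A) = max_i A i i`. -/
noncomputable def trMax {n : ℕ} (A : Matrix (Fin n) (Fin n) ℝ) : ℝ := ⨆ i, A i i

/-- The set 𝒳_{n×k} of nonnegative `n×k` matrices with `Xᵀ ⊗ X = I_k`. -/
def Xset (n k : ℕ) : Set (Matrix (Fin n) (Fin k) ℝ) :=
  {X | (∀ i j, 0 ≤ X i j) ∧ maxMul Xᵀ X = 1}

/-- The max `k`-numerical range `W_max^k(A) = { tr⊗(Xᵀ⊗A⊗X) : X ∈ 𝒳_{n×k} }`. -/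
noncomputable def Wmax {n : ℕ} (k : ℕ) (A : Matrix (Fin n) (Fin n) ℝ) : Set ℝ :=
  {z | ∃ X ∈ Xset n k, z = trMax (maxMul (maxMul Xᵀ A) X)}

open Finset
open scoped Classical

section Aux

lemma continuous_sup'_aux {ι : Type*} (s : Finset ι) (hs : s.Nonempty)
    (g : ι → ℝ → ℝ) (hg : ∀ i, Continuous (g i)) :
    Continuous fun t => s.sup' hs fun i => g i t := by
  induction hs using Finset.Nonempty.cons_induction with
  | singleton a => simpa using hg a
  | cons a s ha hs ih =>
      simp only [Finset.sup'_cons hs]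
      exact (hg a).max ih

lemma sup'_mul_right {ι : Type*} (s : Finset ι) (hs : s.Nonempty) (f : ι → ℝ)
    {c : ℝ} (hc : 0 ≤ c) : (s.sup' hs f) * c = s.sup' hs fun i => f i * c :=
  Finset.comp_sup'_eq_sup'_comp hs (· * c) fun a b => max_mul_of_nonneg a b hc

lemma trMax_eval {n k : ℕ} (hn : 0 < n) (hk : 0 < k)
    (A : Matrix (Fin n) (Fin n) ℝ) (Y : Matrix (Fin n) (Fin k) ℝ)
    (hY : ∀ i j, 0 ≤ Y i j) :
    trMax (maxMul (maxMul Yᵀ A) Y)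
      = (univ : Finset (Fin k)).sup' ⟨⟨0, hk⟩, mem_univ _⟩ fun p =>
        (univ : Finset (Fin n)).sup' ⟨⟨0, hn⟩, mem_univ _⟩ fun j =>
        (univ : Finset (Fin n)).sup' ⟨⟨0, hn⟩, mem_univ _⟩ fun i =>
          Y i p * A i j * Y j p := by
  haveI : Nonempty (Fin k) := ⟨⟨0, hk⟩⟩
  haveI : Nonempty (Fin n) := ⟨⟨0, hn⟩⟩
  rw [trMax, ← Finset.sup'_univ_eq_ciSup]
  apply Finset.sup'_congr _ rfl
  intro p _
  show (⨆ j, (maxMul Yᵀ A) p j * Y j p) = _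
  rw [← Finset.sup'_univ_eq_ciSup]
  apply Finset.sup'_congr _ rfl
  intro j _
  show (⨆ i, Yᵀ p i * A i j) * Y j p = _
  rw [← Finset.sup'_univ_eq_ciSup, sup'_mul_right _ _ _ (hY j p)]
  apply Finset.sup'_congr _ rfl
  intro i _
  simp [Matrix.transpose_apply]

/-- The interpolating family of matrices used in the proof. -/
noncomputable def myX {n k : ℕ} (U : Finset (Fin n)) (s₁ : Fin n)
    (ε : {x // x ∈ U} ≃ Fin k) (t : ℝ) : Matrix (Fin n) (Fin k) ℝ :=
  Matrix.of fun i j =>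
    if (ε.symm j : Fin n) = i then 1
    else if (ε.symm j : Fin n) = s₁ ∧ i ∉ U then t else 0

variable {n k : ℕ} (U : Finset (Fin n)) (s₁ : Fin n) (ε : {x // x ∈ U} ≃ Fin k) {t : ℝ}

lemma myX_nonneg (ht : 0 ≤ t) (i j) : 0 ≤ myX U s₁ ε t i j := by
  unfold myX; simp only [Matrix.of_apply]; split_ifs <;> norm_num [ht]

lemma myX_le_one (ht1 : t ≤ 1) (i j) : myX U s₁ ε t i j ≤ 1 := by
  unfold myX; simp only [Matrix.of_apply]; split_ifs <;> norm_num [ht1]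

lemma myX_diag (j) : myX U s₁ ε t (ε.symm j : Fin n) j = 1 := by
  unfold myX; simp

lemma myX_zero_of (i j) (h1 : (ε.symm j : Fin n) ≠ i)
    (h2 : ¬((ε.symm j : Fin n) = s₁ ∧ i ∉ U)) : myX U s₁ ε t i j = 0 := by
  unfold myX; simp only [Matrix.of_apply]; rw [if_neg h1, if_neg h2]

lemma myX_continuous (i j) : Continuous fun t => myX U s₁ ε t i j := by
  unfold myX; simp only [Matrix.of_apply]
  split_ifs <;> [exact continuous_const; exact continuous_id; exact continuous_const]

lemma myX_zero_apply (i j) :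
    myX U s₁ ε 0 i j = if (ε.symm j : Fin n) = i then 1 else 0 := by
  unfold myX; simp only [Matrix.of_apply]; split_ifs <;> rfl

lemma myX_orth (ht0 : 0 ≤ t) (ht1 : t ≤ 1) :
    maxMul (myX U s₁ ε t)ᵀ (myX U s₁ ε t) = 1 := by
  ext p q
  show (⨆ i, (myX U s₁ ε t)ᵀ p i * myX U s₁ ε t i q) = (1 : Matrix (Fin k) (Fin k) ℝ) p q
  simp only [Matrix.transpose_apply]
  rcases eq_or_ne p q with rfl | hpq
  · rw [Matrix.one_apply_eq]
    haveI : Nonempty (Fin n) := ⟨(ε.symm p : Fin n)⟩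
    apply le_antisymm
    · exact ciSup_le fun i => mul_le_one₀ (myX_le_one U s₁ ε ht1 i p)
        (myX_nonneg U s₁ ε ht0 i p) (myX_le_one U s₁ ε ht1 i p)
    · have h := le_ciSup (f := fun i => myX U s₁ ε t i p * myX U s₁ ε t i p)
        (Set.Finite.bddAbove (Set.finite_range _)) (ε.symm p : Fin n)
      rwa [myX_diag, mul_one] at h
  · rw [Matrix.one_apply_ne hpq]
    have hz : ∀ i, myX U s₁ ε t i p * myX U s₁ ε t i q = 0 := by
      intro i
      have huv : (ε.symm p : Fin n) ≠ (ε.symm q : Fin n) := by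
        intro h
        exact hpq (by simpa using congrArg ε (Subtype.ext h :
          (ε.symm p : {x // x ∈ U}) = ε.symm q))
      by_cases h1 : (ε.symm p : Fin n) = i
      · have : myX U s₁ ε t i q = 0 := by
          apply myX_zero_of
          · rw [← h1]; exact fun h => huv h.symm
          · rintro ⟨-, hiU⟩; exact hiU (h1 ▸ (ε.symm p).2)
        rw [this, mul_zero]
      · by_cases h2 : (ε.symm q : Fin n) = i
        · have : myX U s₁ ε t i p = 0 := by
            apply myX_zero_of U s₁ ε i p h1
            rintro ⟨-, hiU⟩; exact hiU (h2 ▸ (ε.symm q).2)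
          rw [this, zero_mul]
        · by_cases h3 : (ε.symm p : Fin n) = s₁ ∧ i ∉ U
          · have : myX U s₁ ε t i q = 0 := by
              apply myX_zero_of U s₁ ε i q h2
              rintro ⟨hq, -⟩; exact huv (h3.1.trans hq.symm)
            rw [this, mul_zero]
          · rw [myX_zero_of U s₁ ε i p h1 h3, zero_mul]
    calc (⨆ i, myX U s₁ ε t i p * myX U s₁ ε t i q) = ⨆ _ : Fin n, (0:ℝ) :=
          iSup_congr hz
      _ = 0 := by
            haveI : Nonempty (Fin n) := ⟨(ε.symm p : Fin n)⟩
            exact ciSup_const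

end Aux

/-- For a nonnegative `n × n` matrix `A` and `1 ≤ k < n`, with
`c = min over k-element subsets S of max_{j ∈ S} a_{jj}` and `d = max_{i,j} a_{ij}`,
every `z` with `c ≤ z ≤ d` belongs to `W_max^k(A)`, i.e. `[c, d] ⊆ W_max^k(A)`. -/
theorem stmt_4 {n k : ℕ} (hk : 1 ≤ k) (hkn : k < n)
    (A : Matrix (Fin n) (Fin n) ℝ) (hA : ∀ i j, 0 ≤ A i j) :
    Set.Icc
        (⨅ S : {S : Finset (Fin n) // S.card = k}, ⨆ j : {x : Fin n // x ∈ S.1}, A j.1 j.1)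
        (⨆ i, ⨆ j, A i j) ⊆ Wmax k A := by
  intro z hz
  obtain ⟨hcz, hzd⟩ := hz
  have hn0 : 0 < n := lt_of_le_of_lt (Nat.zero_le k) hkn
  haveI : Nonempty (Fin k) := ⟨⟨0, hk⟩⟩
  haveI : Nonempty (Fin n) := ⟨⟨0, hn0⟩⟩
  -- a minimizing subset S₀
  have hSex : ∃ S : Finset (Fin n), S.card = k := by
    obtain ⟨t, -, ht⟩ := Finset.exists_subset_card_eq (s := (univ : Finset (Fin n))) (n := k)
      (by simpa using hkn.le)
    exact ⟨t, ht⟩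
  haveI : Nonempty {S : Finset (Fin n) // S.card = k} := ⟨⟨hSex.choose, hSex.choose_spec⟩⟩
  obtain ⟨S₀, hS₀min⟩ := Finite.exists_min
    (fun S : {S : Finset (Fin n) // S.card = k} => ⨆ j : {x : Fin n // x ∈ S.1}, A j.1 j.1)
  have hS₀z : ∀ j ∈ S₀.1, A j j ≤ z := by
    intro j hj
    have h1 : (⨆ j : {x : Fin n // x ∈ S₀.1}, A j.1 j.1) ≤ z :=
      le_trans (le_ciInf hS₀min) hcz
    haveI : Nonempty {x : Fin n // x ∈ S₀.1} := ⟨⟨j, hj⟩⟩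
    exact le_trans (le_ciSup (f := fun x : {x : Fin n // x ∈ S₀.1} => A x.1 x.1)
      (Set.Finite.bddAbove (Set.finite_range _)) ⟨j, hj⟩) h1
  have hz0 : (0:ℝ) ≤ z := by
    obtain ⟨j, hj⟩ := Finset.card_pos.mp (by rw [S₀.2]; exact hk)
    exact le_trans (hA j j) (hS₀z j hj)
  -- a maximizing entry
  obtain ⟨⟨r₀, s₀⟩, hmax⟩ := Finite.exists_max (fun p : Fin n × Fin n => A p.1 p.2)
  have hzr₀ : z ≤ A r₀ s₀ :=
    le_trans hzd (ciSup_le fun i => ciSup_le fun j => hmax (i, j))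
  -- the set of small diagonal entries
  set D : Finset (Fin n) := Finset.univ.filter (fun i => A i i ≤ z) with hD
  have hkD : k ≤ D.card := by
    have hsub : S₀.1 ⊆ D := fun j hj => Finset.mem_filter.mpr ⟨Finset.mem_univ _, hS₀z j hj⟩
    calc k = S₀.1.card := S₀.2.symm
      _ ≤ D.card := Finset.card_le_card hsub
  -- choose the "big entry" (r, s)
  obtain ⟨r, s, hrs, hcard⟩ : ∃ r s : Fin n, z ≤ A r s ∧ k - 1 ≤ (D \ {r, s}).card := by
    by_cases hgood : k - 1 ≤ (D \ {r₀, s₀}).card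
    · exact ⟨r₀, s₀, hzr₀, hgood⟩
    · have hDuniv : D ≠ Finset.univ := by
        intro h
        apply hgood
        have h2 : ({r₀, s₀} : Finset (Fin n)).card ≤ 2 :=
          le_trans (Finset.card_insert_le _ _) (by simp)
        have h3 := Finset.le_card_sdiff ({r₀, s₀} : Finset (Fin n)) D
        have hcn : D.card = n := by rw [h]; simp
        omega
      obtain ⟨m, hm⟩ : ∃ m, m ∉ D := by
        by_contra h
        push_neg at h
        exact hDuniv (Finset.eq_univ_iff_forall.mpr h)
      have hzm : z ≤ A m m := by
        have h' : ¬ (A m m ≤ z) := by simpa [hD] using hm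
        exact le_of_lt (not_le.mp h')
      refine ⟨m, m, hzm, ?_⟩
      have hDm : D \ {m, m} = D := by
        ext x
        simp only [Finset.mem_sdiff, Finset.mem_insert, Finset.mem_singleton, or_self]
        constructor
        · exact fun h => h.1
        · intro hx
          exact ⟨hx, fun h => hm (h ▸ hx)⟩
      rw [hDm]; omega
  -- the subset T and the element s₁
  obtain ⟨T, hTsub, hTcard⟩ := Finset.exists_subset_card_eq (s := D \ {r, s}) (n := k - 1) hcard
  have hTD : T ⊆ D := hTsub.trans (Finset.sdiff_subset)
  obtain ⟨s₁, hs₁D, hs₁T⟩ : ∃ s₁, s₁ ∈ D ∧ s₁ ∉ T := by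
    have hlt : 0 < (D \ T).card := by
      have := Finset.le_card_sdiff T D
      omega
    obtain ⟨s₁, hs₁⟩ := Finset.card_pos.mp hlt
    rw [Finset.mem_sdiff] at hs₁
    exact ⟨s₁, hs₁.1, hs₁.2⟩
  have hrT : r ∉ T := fun h => by
    have := hTsub h; rw [Finset.mem_sdiff] at this; exact this.2 (by simp)
  have hsT : s ∉ T := fun h => by
    have := hTsub h; rw [Finset.mem_sdiff] at this; exact this.2 (by simp)
  set U : Finset (Fin n) := insert s₁ T with hU
  have hUcard : U.card = k := by
    rw [hU, Finset.card_insert_of_notMem hs₁T, hTcard]; omega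
  have hUD : ∀ i ∈ U, A i i ≤ z := by
    intro i hi
    rcases Finset.mem_insert.mp hi with rfl | hiT
    · have := hs₁D; rw [hD, Finset.mem_filter] at this; exact this.2
    · have := hTD hiT; rw [hD, Finset.mem_filter] at this; exact this.2
  set ε : {x // x ∈ U} ≃ Fin k := Finset.equivFinOfCardEq hUcard with hε
  -- the function and its properties
  set F : ℝ → ℝ := fun t => trMax (maxMul (maxMul (myX U s₁ ε t)ᵀ A) (myX U s₁ ε t)) with hF
  set G : ℝ → ℝ := fun t =>
    (univ : Finset (Fin k)).sup' ⟨⟨0, hk⟩, mem_univ _⟩ fun p =>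
    (univ : Finset (Fin n)).sup' ⟨⟨0, hn0⟩, mem_univ _⟩ fun j =>
    (univ : Finset (Fin n)).sup' ⟨⟨0, hn0⟩, mem_univ _⟩ fun i =>
      myX U s₁ ε t i p * A i j * myX U s₁ ε t j p with hG
  have hFG : ∀ t ∈ Set.Icc (0:ℝ) 1, F t = G t := fun t ht =>
    trMax_eval hn0 hk A _ (fun i j => myX_nonneg U s₁ ε ht.1 i j)
  have hGcont : Continuous G := by
    apply continuous_sup'_aux
    intro p
    apply continuous_sup'_aux
    intro j
    apply continuous_sup'_aux
    intro i
    exact ((myX_continuous U s₁ ε i p).mul continuous_const).mul (myX_continuous U s₁ ε j p)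
  have hG0 : G 0 ≤ z := by
    apply Finset.sup'_le
    intro p _
    apply Finset.sup'_le
    intro j _
    apply Finset.sup'_le
    intro i _
    rw [myX_zero_apply, myX_zero_apply]
    split_ifs with h1 h2
    · rw [← h1, ← h2, one_mul, mul_one]
      exact hUD _ (ε.symm p).2
    · rw [mul_zero]; exact hz0
    · rw [zero_mul, zero_mul]; exact hz0
    · rw [zero_mul, zero_mul]; exact hz0
  have hG1 : z ≤ G 1 := by
    set p₀ : Fin k := ε ⟨s₁, Finset.mem_insert_self _ _⟩ with hp₀
    have hcol : ∀ x : Fin n, x ∉ T → myX U s₁ ε 1 x p₀ = 1 := by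
      intro x hx
      have hsymm : (ε.symm p₀ : Fin n) = s₁ := by
        rw [hp₀, Equiv.symm_apply_apply]
      by_cases hxs : s₁ = x
      · subst hxs
        have hd := myX_diag U s₁ ε (t := (1:ℝ)) p₀
        rwa [hsymm] at hd
      · have hxU : x ∉ U := by
          intro hmem
          rcases Finset.mem_insert.mp hmem with h | h
          · exact hxs h.symm
          · exact hx h
        unfold myX
        rw [Matrix.of_apply, hsymm, if_neg hxs, if_pos ⟨rfl, hxU⟩]
    have hterm : z ≤ myX U s₁ ε 1 r p₀ * A r s * myX U s₁ ε 1 s p₀ := by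
      rw [hcol r hrT, hcol s hsT, one_mul, mul_one]
      exact hrs
    calc z ≤ myX U s₁ ε 1 r p₀ * A r s * myX U s₁ ε 1 s p₀ := hterm
      _ ≤ G 1 := by
          apply Finset.le_sup'_of_le _ (Finset.mem_univ p₀)
          apply Finset.le_sup'_of_le _ (Finset.mem_univ s)
          exact Finset.le_sup'
            (f := fun i => myX U s₁ ε 1 i p₀ * A i s * myX U s₁ ε 1 s p₀)
            (Finset.mem_univ r)
  -- intermediate value theorem
  have hFcont : ContinuousOn F (Set.Icc 0 1) :=
    (hGcont.continuousOn).congr hFG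
  have hzmem : z ∈ Set.Icc (F 0) (F 1) := by
    rw [hFG 0 ⟨le_refl _, zero_le_one⟩, hFG 1 ⟨zero_le_one, le_refl _⟩]
    exact ⟨hG0, hG1⟩
  obtain ⟨t₀, ht₀, hft₀⟩ := intermediate_value_Icc zero_le_one hFcont hzmem
  exact ⟨myX U s₁ ε t₀,
    ⟨fun i j => myX_nonneg U s₁ ε ht₀.1 i j, myX_orth U s₁ ε ht₀.1 ht₀.2⟩,
    hft₀.symm⟩
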